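/- Let A and q be nonzero complex numbers with q² ≠ 1, q⁴ ≠ 1, q⁶ ≠ 1, write {x} = x − x⁻¹, and let S₁* = {A}/{q}, S₃* = {A}{Aq}{Aq²}/({q}{q²}{q³}), S₂₁* = {A}{Aq}{Aq⁻¹}/({q}{q}{q³}), S₁₁₁* = {A}{Aq⁻¹}{Aq⁻²}/({q}{q²}{q³}). Then S₃* − (q² − 1 + q⁻²)(q⁴ − q² + 1 − q⁻² + q⁻⁴)·S₂₁* + S₁₁₁* = S₁*·( (−q² + 1 − q⁻²)·A² + (q⁴ − q² + 3 − q⁻² + q⁻⁴) + (−q² + 1 − q⁻²)·A⁻² ), which is the HOMFLY polynomial of the knot 6₃ realized as the 3-strand braid (2,−1,1,−2). -/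

import Mathlib

/-- `{x} := x − x⁻¹`. -/
noncomputable def br (x : ℂ) : ℂ := x - x⁻¹

/-- `S₁* = {A}/{q}`. -/
noncomputable def S1 (A q : ℂ) : ℂ := br A / br q

/-- `S₂* = {A}{Aq}/({q}{q²})`. -/
noncomputable def S2 (A q : ℂ) : ℂ := br A * br (A * q) / (br q * br (q ^ 2))

/-- `S₁₁* = {A}{Aq⁻¹}/({q}{q²})`. -/
noncomputable def S11 (A q : ℂ) : ℂ := br A * br (A / q) / (br q * br (q ^ 2))

/-- `S₃* = {A}{Aq}{Aq²}/({q}{q²}{q³})`. -/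
noncomputable def S3 (A q : ℂ) : ℂ :=
  br A * br (A * q) * br (A * q ^ 2) / (br q * br (q ^ 2) * br (q ^ 3))

/-- `S₂₁* = {A}{Aq}{Aq⁻¹}/({q}{q}{q³})`. -/
noncomputable def S21 (A q : ℂ) : ℂ :=
  br A * br (A * q) * br (A / q) / (br q * br q * br (q ^ 3))

/-- `S₁₁₁* = {A}{Aq⁻¹}{Aq⁻²}/({q}{q²}{q³})`. -/
noncomputable def S111 (A q : ℂ) : ℂ :=
  br A * br (A / q) * br (A / q ^ 2) / (br q * br (q ^ 2) * br (q ^ 3))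

set_option maxHeartbeats 4000000 in
/-- the HOMFLY polynomial of the knot `6₃` as the 3-strand braid
`(2,−1,1,−2)`: `S₃* − (q² − 1 + q⁻²)(q⁴ − q² + 1 − q⁻² + q⁻⁴)·S₂₁* + S₁₁₁*
= S₁*·((−q² + 1 − q⁻²)·A² + (q⁴ − q² + 3 − q⁻² + q⁻⁴) + (−q² + 1 − q⁻²)·A⁻²)`. -/
theorem knot_6_3_three_strand (A q : ℂ) (hA : A ≠ 0) (hq : q ≠ 0)
    (h2 : q ^ 2 ≠ 1) (h4 : q ^ 4 ≠ 1) (h6 : q ^ 6 ≠ 1) :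
    S3 A q -
        (q ^ (2 : ℤ) - 1 + q ^ (-2 : ℤ)) *
          (q ^ (4 : ℤ) - q ^ (2 : ℤ) + 1 - q ^ (-2 : ℤ) + q ^ (-4 : ℤ)) * S21 A q +
        S111 A q =
      S1 A q *
        ((-q ^ (2 : ℤ) + 1 - q ^ (-2 : ℤ)) * A ^ (2 : ℤ) +
          (q ^ (4 : ℤ) - q ^ (2 : ℤ) + 3 - q ^ (-2 : ℤ) + q ^ (-4 : ℤ)) +
          (-q ^ (2 : ℤ) + 1 - q ^ (-2 : ℤ)) * A ^ (-2 : ℤ)) := by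
  have hq2 : q ^ 2 - 1 ≠ 0 := sub_ne_zero.mpr h2
  have hq4 : q ^ 4 - 1 ≠ 0 := sub_ne_zero.mpr h4
  have hq6 : q ^ 6 - 1 ≠ 0 := sub_ne_zero.mpr h6
  have hbq : br q ≠ 0 := by
    rw [br]; intro h; apply hq2; field_simp at h; linear_combination h
  have hbq2 : br (q ^ 2) ≠ 0 := by
    rw [br]; intro h; apply hq4; field_simp at h; linear_combination h
  have hbq3 : br (q ^ 3) ≠ 0 := by
    rw [br]; intro h; apply hq6; field_simp at h; linear_combination h
  have hd : A ^ 3 * q ^ 5 * (q ^ 2 - 1) ^ 2 * (q ^ 4 - 1) * (q ^ 6 - 1) ≠ 0 :=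
    mul_ne_zero (mul_ne_zero (mul_ne_zero (mul_ne_zero (pow_ne_zero 3 hA)
      (pow_ne_zero 5 hq)) (pow_ne_zero 2 hq2)) hq4) hq6
  have hS1 : S1 A q = (A ^ 2 - 1) * q / (A * (q ^ 2 - 1)) := by
    rw [S1, div_eq_div_iff hbq (mul_ne_zero hA hq2), br, br]
    field_simp
  have hS3 : S3 A q =
      (A ^ 2 - 1) * (A ^ 2 * q ^ 2 - 1) * (A ^ 2 * q ^ 4 - 1) * q ^ 8 * (q ^ 2 - 1) /
        (A ^ 3 * q ^ 5 * (q ^ 2 - 1) ^ 2 * (q ^ 4 - 1) * (q ^ 6 - 1)) := by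
    rw [S3, div_eq_div_iff (mul_ne_zero (mul_ne_zero hbq hbq2) hbq3) hd,
      br, br, br, br, br, br]
    field_simp
  have hS21 : S21 A q =
      (A ^ 2 - 1) * (A ^ 2 * q ^ 2 - 1) * (A ^ 2 - q ^ 2) * q ^ 8 * (q ^ 4 - 1) /
        (A ^ 3 * q ^ 5 * (q ^ 2 - 1) ^ 2 * (q ^ 4 - 1) * (q ^ 6 - 1)) := by
    rw [S21, div_eq_div_iff (mul_ne_zero (mul_ne_zero hbq hbq) hbq3) hd,
      br, br, br, br, br]
    field_simp
  have hS111 : S111 A q =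
      (A ^ 2 - 1) * (A ^ 2 - q ^ 2) * (A ^ 2 - q ^ 4) * q ^ 8 * (q ^ 2 - 1) /
        (A ^ 3 * q ^ 5 * (q ^ 2 - 1) ^ 2 * (q ^ 4 - 1) * (q ^ 6 - 1)) := by
    rw [S111, div_eq_div_iff (mul_ne_zero (mul_ne_zero hbq hbq2) hbq3) hd,
      br, br, br, br, br, br]
    field_simp
  have z2 : q ^ (2 : ℤ) = q ^ 2 := by norm_cast
  have z4 : q ^ (4 : ℤ) = q ^ 4 := by norm_cast
  have zm2 : q ^ (-2 : ℤ) = (q ^ 2)⁻¹ := by rw [zpow_neg]; norm_cast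
  have zm4 : q ^ (-4 : ℤ) = (q ^ 4)⁻¹ := by rw [zpow_neg]; norm_cast
  have zA2 : A ^ (2 : ℤ) = A ^ 2 := by norm_cast
  have zAm2 : A ^ (-2 : ℤ) = (A ^ 2)⁻¹ := by rw [zpow_neg]; norm_cast
  rw [hS1, hS3, hS21, hS111, z2, z4, zm2, zm4, zA2, zAm2, mul_div_assoc',
    div_sub_div_same, ← add_div, div_eq_iff hd, div_mul_eq_mul_div,
    div_mul_eq_mul_div, eq_div_iff (mul_ne_zero hA hq2)]
  simp only [inv_eq_one_div]
  field_simp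
  ring
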